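/- Suppose Y = H X + U and Z = G X + V, where H, G are deterministic matrices and X, U, V are mutually independent with E[U] = 0. Then E[Y|Z] = H E[X|Z] almost surely, and consequently the PLMMSE estimator takes the form X̂ = A Y + (I − A H) E[X|Z] with A = (Γ_{XX} − Γ_{E[X|Z],E[X|Z]}) Hᵀ (H (Γ_{XX} − Γ_{E[X|Z],E[X|Z]}) Hᵀ + Γ_{UU})†. -/

import Mathlib

open MeasureTheory Matrix ProbabilityTheory

noncomputable def condExpVec {Ω : Type} {mΩ : MeasurableSpace Ω} (μ : Measure Ω)
    (m : MeasurableSpace Ω) {N : ℕ} (Y : Ω → Fin N → ℝ) : Ω → Fin N → ℝ :=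
  fun ω i => (μ[(fun ω' => Y ω' i)|m]) ω

noncomputable def meanVec {Ω : Type} {mΩ : MeasurableSpace Ω} (μ : Measure Ω)
    {N : ℕ} (Y : Ω → Fin N → ℝ) : Fin N → ℝ := fun i => ∫ ω, Y ω i ∂μ

noncomputable def crossCov {Ω : Type} {mΩ : MeasurableSpace Ω} (μ : Measure Ω)
    {M N : ℕ} (X : Ω → Fin M → ℝ) (Y : Ω → Fin N → ℝ) : Matrix (Fin M) (Fin N) ℝ :=
  Matrix.of fun i j => ∫ ω, (X ω i - meanVec μ X i) * (Y ω j - meanVec μ Y j) ∂μ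

/-- The residual `Y - E[Y|m]` (the innovation `Ỹ`). -/
noncomputable def resid {Ω : Type} {mΩ : MeasurableSpace Ω} (μ : Measure Ω)
    (m : MeasurableSpace Ω) {N : ℕ} (Y : Ω → Fin N → ℝ) : Ω → Fin N → ℝ :=
  fun ω => Y ω - condExpVec (mΩ := mΩ) μ m Y ω

def IsMoorePenrose {m n : ℕ} (A : Matrix (Fin m) (Fin n) ℝ) (P : Matrix (Fin n) (Fin m) ℝ) : Prop :=
  A * P * A = A ∧ P * A * P = P ∧ (A * P)ᵀ = A * P ∧ (P * A)ᵀ = P * A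

/-- The PLMMSE estimator `X̂ = Γ_{XỸ} Γ_{ỸỸ}† Ỹ + E[X|Z]`, where `P` is a matrix
playing the role of the Moore–Penrose pseudo-inverse `Γ_{ỸỸ}†`. -/
noncomputable def plmmse {Ω : Type} {mΩ : MeasurableSpace Ω} (μ : Measure Ω)
    {M N Q : ℕ} (X : Ω → Fin M → ℝ) (Y : Ω → Fin N → ℝ) (Z : Ω → Fin Q → ℝ)
    (P : Matrix (Fin N) (Fin N) ℝ) : Ω → Fin M → ℝ :=
  fun ω =>
    (crossCov μ X (resid μ (MeasurableSpace.comap Z inferInstance) Y) * P).mulVec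
      (resid μ (MeasurableSpace.comap Z inferInstance) Y ω) +
    condExpVec μ (MeasurableSpace.comap Z inferInstance) X ω

section Helpers

lemma mp_unique {m n : ℕ} {A : Matrix (Fin m) (Fin n) ℝ} {P Q : Matrix (Fin n) (Fin m) ℝ}
    (hP : IsMoorePenrose A P) (hQ : IsMoorePenrose A Q) : P = Q := by
  obtain ⟨hP1, hP2, hP3, hP4⟩ := hP
  obtain ⟨hQ1, hQ2, hQ3, hQ4⟩ := hQ
  have hAP : A * P = A * Q := by
    calc A * P = (A * P)ᵀ := hP3.symm
    _ = Pᵀ * (A * Q * A)ᵀ := by rw [hQ1, Matrix.transpose_mul]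
    _ = Pᵀ * (Aᵀ * (A * Q)ᵀ) := by rw [Matrix.transpose_mul (A * Q) A]
    _ = (A * P)ᵀ * (A * Q)ᵀ := by rw [Matrix.transpose_mul A P, Matrix.mul_assoc]
    _ = (A * P) * (A * Q) := by rw [hP3, hQ3]
    _ = (A * P * A) * Q := by simp only [Matrix.mul_assoc]
    _ = A * Q := by rw [hP1]
  have hPA : P * A = Q * A := by
    calc P * A = (P * A)ᵀ := hP4.symm
    _ = (A * Q * A)ᵀ * Pᵀ := by rw [hQ1, Matrix.transpose_mul]
    _ = ((Q * A)ᵀ * Aᵀ) * Pᵀ := by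
        rw [Matrix.mul_assoc A Q A, Matrix.transpose_mul A (Q * A)]
    _ = (Q * A)ᵀ * (P * A)ᵀ := by rw [Matrix.mul_assoc, Matrix.transpose_mul P A]
    _ = (Q * A) * (P * A) := by rw [hP4, hQ4]
    _ = Q * (A * P * A) := by simp only [Matrix.mul_assoc]
    _ = Q * A := by rw [hP1]
  calc P = P * A * P := hP2.symm
  _ = Q * A * P := by rw [hPA]
  _ = Q * (A * Q) := by rw [Matrix.mul_assoc, ← hAP]
  _ = Q := by rw [← Matrix.mul_assoc, hQ2]

variable {Ω : Type} {m mΩ : MeasurableSpace Ω} {μ : Measure Ω} [IsProbabilityMeasure μ]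

omit [IsProbabilityMeasure μ] in
lemma integrable_mul₂ [IsFiniteMeasure μ] {f g : Ω → ℝ} (hf : MemLp f 2 μ) (hg : MemLp g 2 μ) :
    Integrable (fun ω => f ω * g ω) μ := by
  have h := hf.smul (φ := g) hg (p := 2) (q := 2) (r := 1)
    (hpqr := ⟨by simp [ENNReal.inv_two_add_inv_two]⟩)
  rw [memLp_one_iff_integrable] at h
  exact h.congr (Filter.Eventually.of_forall fun ω => by simp [smul_eq_mul, mul_comm])

lemma memℒp_two_condexp (hm : m ≤ mΩ) {f : Ω → ℝ} (hf : MemLp f 2 μ) :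
    MemLp (μ[f|m]) 2 μ := by
  have hfi : Integrable f μ := hf.integrable one_le_two
  set g : Ω → ℝ := ((condExpL2 ℝ ℝ hm (hf.toLp f) : Lp ℝ 2 μ) : Ω → ℝ) with hg
  have hgmem : MemLp g 2 μ := Lp.memLp _
  have hae : g =ᵐ[μ] μ[f|m] := by
    refine ae_eq_condExp_of_forall_setIntegral_eq hm hfi ?_ ?_ ?_
    · intro s _ _
      exact (hgmem.integrable one_le_two).integrableOn
    · intro s hs hμs
      rw [integral_condExpL2_eq hm (hf.toLp f) hs hμs.ne]
      exact setIntegral_congr_ae (hm s hs) ((hf.coeFn_toLp).mono fun x hx _ => hx)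
    · exact (aestronglyMeasurable_condExpL2 hm _)
  exact hgmem.ae_eq hae

lemma integral_condexp_mul_right (hm : m ≤ mΩ) {f g : Ω → ℝ}
    (hf : MemLp f 2 μ) (hg : MemLp g 2 μ) :
    ∫ ω, (μ[g|m]) ω * f ω ∂μ = ∫ ω, (μ[g|m]) ω * (μ[f|m]) ω ∂μ := by
  have hgc : MemLp (μ[g|m]) 2 μ := memℒp_two_condexp hm hg
  have hint : Integrable (μ[g|m] * f) μ := by
    simpa [Pi.mul_def] using integrable_mul₂ hgc hf
  have h := condExp_mul_of_stronglyMeasurable_left (m := m) (μ := μ)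
    (stronglyMeasurable_condExp) hint (hf.integrable one_le_two)
  calc ∫ ω, (μ[g|m]) ω * f ω ∂μ = ∫ ω, (μ[g|m] * f) ω ∂μ := rfl
  _ = ∫ ω, (μ[μ[g|m] * f|m]) ω ∂μ := (integral_condExp hm).symm
  _ = ∫ ω, (μ[g|m] * μ[f|m]) ω ∂μ := integral_congr_ae h
  _ = _ := rfl

omit [IsProbabilityMeasure μ] in
lemma cov_expand [IsProbabilityMeasure μ] {f g : Ω → ℝ} (hf : MemLp f 2 μ) (hg : MemLp g 2 μ) :
    ∫ ω, (f ω - ∫ ω', f ω' ∂μ) * (g ω - ∫ ω', g ω' ∂μ) ∂μ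
      = ∫ ω, f ω * g ω ∂μ - (∫ ω, f ω ∂μ) * ∫ ω, g ω ∂μ := by
  have hfi := hf.integrable one_le_two
  have hgi := hg.integrable one_le_two
  have hfg := integrable_mul₂ hf hg
  have hexp : ∀ ω, (f ω - ∫ ω', f ω' ∂μ) * (g ω - ∫ ω', g ω' ∂μ)
      = (f ω * g ω - (∫ ω', f ω' ∂μ) * g ω) - ((∫ ω', g ω' ∂μ) * f ω
        - (∫ ω', f ω' ∂μ) * (∫ ω', g ω' ∂μ)) := fun ω => by ring
  simp only [hexp]
  have h1 : Integrable (fun ω => f ω * g ω - (∫ ω', f ω' ∂μ) * g ω) μ :=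
    hfg.sub (hgi.const_mul _)
  have h2 : Integrable
      (fun ω => (∫ ω', g ω' ∂μ) * f ω - (∫ ω', f ω' ∂μ) * ∫ ω', g ω' ∂μ) μ :=
    (hfi.const_mul _).sub (integrable_const _)
  rw [integral_sub h1 h2, integral_sub hfg (hgi.const_mul _),
    integral_sub (hfi.const_mul _) (integrable_const _),
    integral_const_mul, integral_const_mul, integral_const]
  simp only [probReal_univ, measure_univ, ENNReal.toReal_one, one_smul, smul_eq_mul]
  ring

omit [IsProbabilityMeasure μ] in
lemma integral_add₄ {f1 f2 f3 f4 : Ω → ℝ}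
    (h1 : Integrable f1 μ) (h2 : Integrable f2 μ) (h3 : Integrable f3 μ)
    (h4 : Integrable f4 μ) :
    ∫ ω, (f1 ω + f2 ω + f3 ω + f4 ω) ∂μ
      = ∫ ω, f1 ω ∂μ + ∫ ω, f2 ω ∂μ + ∫ ω, f3 ω ∂μ + ∫ ω, f4 ω ∂μ := by
  have e1 : ∫ ω, (f1 ω + f2 ω) ∂μ = ∫ ω, f1 ω ∂μ + ∫ ω, f2 ω ∂μ := integral_add h1 h2
  have e2 : ∫ ω, (f1 ω + f2 ω + f3 ω) ∂μ = ∫ ω, (f1 ω + f2 ω) ∂μ + ∫ ω, f3 ω ∂μ :=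
    integral_add (h1.add h2) h3
  have e3 : ∫ ω, (f1 ω + f2 ω + f3 ω + f4 ω) ∂μ
      = ∫ ω, (f1 ω + f2 ω + f3 ω) ∂μ + ∫ ω, f4 ω ∂μ :=
    integral_add ((h1.add h2).add h3) h4
  rw [e3, e2, e1]

end Helpers

section Regroup

variable {Ω : Type} {mΩ : MeasurableSpace Ω} {μ : Measure Ω} [IsProbabilityMeasure μ]

lemma indep_regroup {α β γ : Type*} [MeasurableSpace α] [MeasurableSpace β] [MeasurableSpace γ]
    {X : Ω → α} {U : Ω → β} {V : Ω → γ}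
    (hX : Measurable X) (hU : Measurable U) (hV : Measurable V)
    (h1 : IndepFun X (fun ω => (U ω, V ω)) μ) (h2 : IndepFun U V μ) :
    IndepFun U (fun ω => (X ω, V ω)) μ := by
  have hXV : IndepFun X V μ := h1.comp measurable_id measurable_snd
  haveI : IsProbabilityMeasure (μ.map X) := Measure.isProbabilityMeasure_map hX.aemeasurable
  haveI : IsProbabilityMeasure (μ.map U) := Measure.isProbabilityMeasure_map hU.aemeasurable
  haveI : IsProbabilityMeasure (μ.map V) := Measure.isProbabilityMeasure_map hV.aemeasurable
  rw [indepFun_iff_map_prod_eq_prod_map_map hU.aemeasurable (hX.prodMk hV).aemeasurable]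
  have e1 : μ.map (fun ω => (X ω, (U ω, V ω))) = (μ.map X).prod (μ.map fun ω => (U ω, V ω)) :=
    (indepFun_iff_map_prod_eq_prod_map_map hX.aemeasurable
      (hU.prodMk hV).aemeasurable).mp h1
  have e2 : μ.map (fun ω => (U ω, V ω)) = (μ.map U).prod (μ.map V) :=
    (indepFun_iff_map_prod_eq_prod_map_map hU.aemeasurable hV.aemeasurable).mp h2
  have e3 : μ.map (fun ω => (X ω, V ω)) = (μ.map X).prod (μ.map V) :=
    (indepFun_iff_map_prod_eq_prod_map_map hX.aemeasurable hV.aemeasurable).mp hXV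
  set φ : α × β × γ → β × α × γ := fun p => (p.2.1, (p.1, p.2.2)) with hφdef
  rw [e3]
  have key : (fun ω => (U ω, (X ω, V ω))) = φ ∘ (fun ω => (X ω, (U ω, V ω))) := rfl
  have hφ : Measurable φ :=
    ((measurable_fst.comp measurable_snd).prodMk
      (measurable_fst.prodMk (measurable_snd.comp measurable_snd)))
  rw [key, ← Measure.map_map hφ (hX.prodMk (hU.prodMk hV)), e1, e2]
  have hstep1 : ((μ.map X).prod ((μ.map U).prod (μ.map V))).map
      (MeasurableEquiv.prodAssoc.symm : α × β × γ ≃ᵐ (α × β) × γ) =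
      ((μ.map X).prod (μ.map U)).prod (μ.map V) := by
    rw [← Measure.prodAssoc_prod, MeasurableEquiv.map_symm_map]
  have hφeq : φ = (MeasurableEquiv.prodAssoc : (β × α) × γ ≃ᵐ β × α × γ) ∘
      (Prod.map Prod.swap id) ∘ (MeasurableEquiv.prodAssoc.symm : α × β × γ ≃ᵐ (α × β) × γ) := by
    funext p; rfl
  rw [hφeq, ← Measure.map_map (MeasurableEquiv.prodAssoc.measurable) (by fun_prop),
    ← Measure.map_map
      (by fun_prop : Measurable (Prod.map (Prod.swap : α × β → β × α) (id : γ → γ)))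
      MeasurableEquiv.prodAssoc.symm.measurable, hstep1,
    ← Measure.map_prod_map _ _ measurable_swap measurable_id, Measure.prod_swap,
    Measure.map_id, Measure.prodAssoc_prod]

lemma measurable_mulVec' {M N : ℕ} (A : Matrix (Fin N) (Fin M) ℝ) :
    Measurable (fun v : Fin M → ℝ => A.mulVec v) := by
  refine measurable_pi_lambda _ fun i => ?_
  show Measurable fun v : Fin M → ℝ => ∑ j, A i j * v j
  exact Finset.measurable_sum _ fun j _ => (measurable_pi_apply j).const_mul _

end Regroup

/-- for `Y = H X + U`, `Z = G X + V` with `X, U, V` mutually independent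
and `E[U] = 0`, one has `E[Y|Z] = H E[X|Z]` a.s., and the PLMMSE estimator takes the
form `X̂ = A Y + (I - A H) E[X|Z]` with
`A = (Γ_{XX} - Γ_{E[X|Z],E[X|Z]}) Hᵀ (H (Γ_{XX} - Γ_{E[X|Z],E[X|Z]}) Hᵀ + Γ_{UU})†`. -/
theorem stmt10 {Ω : Type} [MeasurableSpace Ω] (μ : Measure Ω) [IsProbabilityMeasure μ]
    {M N Q : ℕ} (X : Ω → Fin M → ℝ) (U : Ω → Fin N → ℝ) (V : Ω → Fin Q → ℝ)
    (H : Matrix (Fin N) (Fin M) ℝ) (G : Matrix (Fin Q) (Fin M) ℝ)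
    (Y : Ω → Fin N → ℝ) (Z : Ω → Fin Q → ℝ)
    (hY : Y = fun ω => H.mulVec (X ω) + U ω) (hZ : Z = fun ω => G.mulVec (X ω) + V ω)
    (hXm : Measurable X) (hUm : Measurable U) (hVm : Measurable V)
    (hX2 : ∀ i, MemLp (fun ω => X ω i) 2 μ) (hU2 : ∀ i, MemLp (fun ω => U ω i) 2 μ)
    (hV2 : ∀ i, MemLp (fun ω => V ω i) 2 μ)
    -- mutual independence of `X`, `U`, `V`:
    (hind1 : IndepFun X (fun ω => (U ω, V ω)) μ) (hind2 : IndepFun U V μ)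
    (hU0 : ∀ i, ∫ ω, U ω i ∂μ = 0)
    (P : Matrix (Fin N) (Fin N) ℝ)
    (hP : IsMoorePenrose
      (crossCov μ (resid μ (MeasurableSpace.comap Z inferInstance) Y)
        (resid μ (MeasurableSpace.comap Z inferInstance) Y)) P)
    (P2 : Matrix (Fin N) (Fin N) ℝ)
    (hP2 : IsMoorePenrose
      (H * (crossCov μ X X -
          crossCov μ (condExpVec μ (MeasurableSpace.comap Z inferInstance) X)
            (condExpVec μ (MeasurableSpace.comap Z inferInstance) X)) * Hᵀ +
        crossCov μ U U) P2) :
    (condExpVec μ (MeasurableSpace.comap Z inferInstance) Y =ᵐ[μ] fun ω =>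
      H.mulVec (condExpVec μ (MeasurableSpace.comap Z inferInstance) X ω)) ∧
    plmmse μ X Y Z P =ᵐ[μ] fun ω =>
      ((crossCov μ X X -
          crossCov μ (condExpVec μ (MeasurableSpace.comap Z inferInstance) X)
            (condExpVec μ (MeasurableSpace.comap Z inferInstance) X)) * Hᵀ * P2).mulVec (Y ω) +
      ((1 : Matrix (Fin M) (Fin M) ℝ) -
          (crossCov μ X X -
            crossCov μ (condExpVec μ (MeasurableSpace.comap Z inferInstance) X)
              (condExpVec μ (MeasurableSpace.comap Z inferInstance) X)) * Hᵀ * P2 * H).mulVec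
        (condExpVec μ (MeasurableSpace.comap Z inferInstance) X ω) := by
    classical
  -- measurability of Z and the sub-σ-algebra
  have hZmeas : Measurable Z := by
    rw [hZ]; exact ((measurable_mulVec' G).comp hXm).add hVm
  set mZ := MeasurableSpace.comap Z inferInstance with hmZ
  have hm : mZ ≤ _ := hZmeas.comap_le
  -- basic integrability
  have hXi : ∀ i, Integrable (fun ω => X ω i) μ := fun i => (hX2 i).integrable one_le_two
  have hUi : ∀ i, Integrable (fun ω => U ω i) μ := fun i => (hU2 i).integrable one_le_two
  have hY2 : ∀ i, MemLp (fun ω => Y ω i) 2 μ := by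
    intro i
    have : (fun ω => Y ω i)
        = (∑ j : Fin M, fun ω => H i j * X ω j) + fun ω => U ω i := by
      funext ω; rw [hY]; simp [Matrix.mulVec, dotProduct, Finset.sum_apply]
    rw [this]
    exact (memLp_finset_sum' _ fun j _ => ((hX2 j).const_mul (H i j))).add (hU2 i)
  have hYi : ∀ i, Integrable (fun ω => Y ω i) μ := fun i => (hY2 i).integrable one_le_two
  have hXh2 : ∀ i, MemLp (μ[fun ω => X ω i|mZ]) 2 μ := fun i => memℒp_two_condexp hm (hX2 i)
  -- independence consequences
  have hUZ : IndepFun U Z μ := by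
    have hUXV : IndepFun U (fun ω => (X ω, V ω)) μ :=
      indep_regroup hXm hUm hVm hind1 hind2
    rw [hZ]
    exact hUXV.comp measurable_id
      (((measurable_mulVec' G).comp measurable_fst).add measurable_snd)
  have hXU : IndepFun X U μ := hind1.comp measurable_id measurable_fst
  -- E[U_j | Z] = 0
  have hUcond : ∀ j, μ[(fun ω => U ω j)|mZ] =ᵐ[μ] 0 := by
    intro j
    have hUU : @Measurable Ω (Fin N → ℝ) (MeasurableSpace.comap U inferInstance) _ U :=
      measurable_iff_comap_le.mpr le_rfl
    have hsm : StronglyMeasurable[MeasurableSpace.comap U inferInstance] (fun ω => U ω j) :=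
      ((measurable_pi_apply j).comp hUU).stronglyMeasurable
    have h := condExp_indep_eq hUm.comap_le hm hsm ((IndepFun_iff_Indep U Z μ).mp hUZ)
    refine h.trans ?_
    rw [hU0 j]
    exact Filter.Eventually.of_forall fun _ => rfl
  -- E[Y_i | Z] = ∑ j, H i j * E[X_j | Z]
  have hYcond : ∀ i, μ[(fun ω => Y ω i)|mZ] =ᵐ[μ]
      fun ω => ∑ j, H i j * (μ[(fun ω' => X ω' j)|mZ]) ω := by
    intro i
    have hdecomp : (fun ω => Y ω i)
        = (∑ j : Fin M, (H i j) • (fun ω => X ω j)) + (fun ω => U ω i) := by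
      funext ω
      rw [hY]
      simp [Matrix.mulVec, dotProduct, Finset.sum_apply]
    have h0 : μ[(fun ω => Y ω i)|mZ]
        = μ[(∑ j : Fin M, (H i j) • (fun ω => X ω j)) + (fun ω => U ω i)|mZ] := by
      rw [hdecomp]
    have h1 := condExp_add (μ := μ) (m := mZ)
      (f := ∑ j : Fin M, (H i j) • (fun ω => X ω j)) (g := fun ω => U ω i)
      (integrable_finset_sum' _ fun j _ => (hXi j).smul (H i j)) (hUi i)
    have h2 := condExp_finset_sum (μ := μ) (m := mZ) (s := (Finset.univ : Finset (Fin M)))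
      (f := fun j => (H i j) • (fun ω => X ω j)) (fun j _ => (hXi j).smul (H i j))
    have h3 : ∀ᵐ ω ∂μ, ∀ j : Fin M,
        (μ[(H i j) • (fun ω' => X ω' j)|mZ]) ω = H i j * (μ[fun ω' => X ω' j|mZ]) ω := by
      rw [ae_all_iff]
      intro j
      exact (condExp_smul (H i j) (fun ω' => X ω' j) mZ).mono fun ω h => by simpa using h
    filter_upwards [h1, h2, h3, hUcond i] with ω e1 e2 e3 e4
    rw [h0, e1, Pi.add_apply, e2, Finset.sum_apply, e4, Pi.zero_apply, add_zero]
    exact Finset.sum_congr rfl fun j _ => e3 j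
  -- Part 1
  have part1 : condExpVec μ mZ Y =ᵐ[μ] fun ω => H.mulVec (condExpVec μ mZ X ω) := by
    filter_upwards [ae_all_iff.mpr hYcond] with ω hω
    funext i
    show (μ[(fun ω' => Y ω' i)|mZ]) ω = H.mulVec (condExpVec μ mZ X ω) i
    rw [hω i]
    rfl
  refine ⟨part1, ?_⟩
  -- ===== Part 2 =====
  set S : Matrix (Fin M) (Fin M) ℝ :=
    crossCov μ X X - crossCov μ (condExpVec μ mZ X) (condExpVec μ mZ X) with hSdef
  have hmm' : ∀ j, ∫ ω, (μ[fun ω' => X ω' j|mZ]) ω ∂μ = ∫ ω, X ω j ∂μ :=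
    fun j => integral_condExp hm
  -- S entries
  have hS : ∀ i k, S i k = ∫ ω, X ω i * X ω k ∂μ
      - ∫ ω, (μ[fun ω' => X ω' i|mZ]) ω * (μ[fun ω' => X ω' k|mZ]) ω ∂μ := by
    intro i k
    have e1 : crossCov μ X X i k
        = ∫ ω, X ω i * X ω k ∂μ - (∫ ω, X ω i ∂μ) * ∫ ω, X ω k ∂μ :=
      cov_expand (hX2 i) (hX2 k)
    have e2 : crossCov μ (condExpVec μ mZ X) (condExpVec μ mZ X) i k
        = ∫ ω, (μ[fun ω' => X ω' i|mZ]) ω * (μ[fun ω' => X ω' k|mZ]) ω ∂μ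
          - (∫ ω, (μ[fun ω' => X ω' i|mZ]) ω ∂μ) * ∫ ω, (μ[fun ω' => X ω' k|mZ]) ω ∂μ :=
      cov_expand (μ := μ) (hXh2 i) (hXh2 k)
    rw [hSdef, Matrix.sub_apply, e1, e2, hmm' i, hmm' k]
    ring
  have horth : ∀ i k, ∫ ω, (μ[fun ω' => X ω' i|mZ]) ω * X ω k ∂μ
      = ∫ ω, (μ[fun ω' => X ω' i|mZ]) ω * (μ[fun ω' => X ω' k|mZ]) ω ∂μ :=
    fun i k => integral_condexp_mul_right hm (hX2 k) (hX2 i)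
  have hXhU : ∀ i j, ∫ ω, (μ[fun ω' => X ω' i|mZ]) ω * U ω j ∂μ = 0 := by
    intro i j
    rw [integral_condexp_mul_right hm (hU2 j) (hX2 i)]
    refine integral_eq_zero_of_ae ?_
    filter_upwards [hUcond j] with ω h
    simp only [Pi.zero_apply] at h
    simp [h]
  have hXU0 : ∀ i j, ∫ ω, X ω i * U ω j ∂μ = 0 := by
    intro i j
    have h := (hXU.comp (measurable_pi_apply i) (measurable_pi_apply j)).integral_mul_eq_mul_integral
      (hX2 i).aestronglyMeasurable (hU2 j).aestronglyMeasurable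
    have h' : ∫ ω, X ω i * U ω j ∂μ = (∫ ω, X ω i ∂μ) * ∫ ω, U ω j ∂μ := h
    rw [h', hU0 j, mul_zero]
  have hUU : ∀ i j, crossCov μ U U i j = ∫ ω, U ω i * U ω j ∂μ := by
    intro i j
    have e : crossCov μ U U i j
        = ∫ ω, (U ω i - meanVec μ U i) * (U ω j - meanVec μ U j) ∂μ := rfl
    have h1 : meanVec μ U i = 0 := hU0 i
    have h2 : meanVec μ U j = 0 := hU0 j
    rw [e, h1, h2]
    simp
  -- residual representation
  have hresY : ∀ᵐ ω ∂μ, ∀ j, resid μ mZ Y ω j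
      = (∑ k, H j k * (X ω k - (μ[fun ω' => X ω' k|mZ]) ω)) + U ω j := by
    filter_upwards [ae_all_iff.mpr hYcond] with ω hω
    intro j
    have e : resid μ mZ Y ω j = Y ω j - (μ[fun ω' => Y ω' j|mZ]) ω := rfl
    rw [e, hω j, hY]
    show (∑ k, H j k * X ω k) + U ω j - _ = _
    simp only [mul_sub, Finset.sum_sub_distrib]
    ring
  have hresmean : ∀ j, meanVec μ (resid μ mZ Y) j = 0 := by
    intro j
    have e : meanVec μ (resid μ mZ Y) j
        = ∫ ω, (Y ω j - (μ[fun ω' => Y ω' j|mZ]) ω) ∂μ := rfl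
    rw [e, integral_sub (hYi j) integrable_condExp, integral_condExp hm, sub_self]
  have hr2 : ∀ k, MemLp (fun ω => X ω k - (μ[fun ω' => X ω' k|mZ]) ω) 2 μ :=
    fun k => (hX2 k).sub (hXh2 k)
  have hXc2 : ∀ i, MemLp (fun ω => X ω i - meanVec μ X i) 2 μ :=
    fun i => (hX2 i).sub (memLp_const _)
  -- scalar cross moments
  have hXr : ∀ i k, ∫ ω, (X ω i - meanVec μ X i)
      * (X ω k - (μ[fun ω' => X ω' k|mZ]) ω) ∂μ = S i k := by
    intro i k
    have hexp : ∀ ω, (X ω i - meanVec μ X i) * (X ω k - (μ[fun ω' => X ω' k|mZ]) ω)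
        = (X ω i * X ω k - (μ[fun ω' => X ω' k|mZ]) ω * X ω i)
          - (meanVec μ X i * X ω k - meanVec μ X i * (μ[fun ω' => X ω' k|mZ]) ω) :=
      fun ω => by ring
    simp only [hexp]
    have i1 : Integrable (fun ω => X ω i * X ω k
        - (μ[fun ω' => X ω' k|mZ]) ω * X ω i) μ :=
      (integrable_mul₂ (hX2 i) (hX2 k)).sub (integrable_mul₂ (hXh2 k) (hX2 i))
    have i2 : Integrable (fun ω => meanVec μ X i * X ω k
        - meanVec μ X i * (μ[fun ω' => X ω' k|mZ]) ω) μ :=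
      ((hXi k).const_mul _).sub (integrable_condExp.const_mul _)
    rw [integral_sub i1 i2,
      integral_sub (integrable_mul₂ (hX2 i) (hX2 k)) (integrable_mul₂ (hXh2 k) (hX2 i)),
      integral_sub ((hXi k).const_mul _) (integrable_condExp.const_mul _),
      integral_const_mul, integral_const_mul, integral_condExp hm,
      integral_condexp_mul_right hm (hX2 i) (hX2 k), hS i k]
    have hc : ∫ ω, (μ[fun ω' => X ω' k|mZ]) ω * (μ[fun ω' => X ω' i|mZ]) ω ∂μ
        = ∫ ω, (μ[fun ω' => X ω' i|mZ]) ω * (μ[fun ω' => X ω' k|mZ]) ω ∂μ :=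
      integral_congr_ae (Filter.Eventually.of_forall fun ω => mul_comm _ _)
    rw [hc]
    ring
  have hrr : ∀ k l, ∫ ω, (X ω k - (μ[fun ω' => X ω' k|mZ]) ω)
      * (X ω l - (μ[fun ω' => X ω' l|mZ]) ω) ∂μ = S k l := by
    intro k l
    have hexp : ∀ ω, (X ω k - (μ[fun ω' => X ω' k|mZ]) ω)
        * (X ω l - (μ[fun ω' => X ω' l|mZ]) ω)
        = (X ω k * X ω l - (μ[fun ω' => X ω' l|mZ]) ω * X ω k)
          - ((μ[fun ω' => X ω' k|mZ]) ω * X ω l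
            - (μ[fun ω' => X ω' k|mZ]) ω * (μ[fun ω' => X ω' l|mZ]) ω) :=
      fun ω => by ring
    simp only [hexp]
    have i1 : Integrable (fun ω => X ω k * X ω l
        - (μ[fun ω' => X ω' l|mZ]) ω * X ω k) μ :=
      (integrable_mul₂ (hX2 k) (hX2 l)).sub (integrable_mul₂ (hXh2 l) (hX2 k))
    have i2 : Integrable (fun ω => (μ[fun ω' => X ω' k|mZ]) ω * X ω l
        - (μ[fun ω' => X ω' k|mZ]) ω * (μ[fun ω' => X ω' l|mZ]) ω) μ :=
      (integrable_mul₂ (hXh2 k) (hX2 l)).sub (integrable_mul₂ (hXh2 k) (hXh2 l))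
    rw [integral_sub i1 i2,
      integral_sub (integrable_mul₂ (hX2 k) (hX2 l)) (integrable_mul₂ (hXh2 l) (hX2 k)),
      integral_sub (integrable_mul₂ (hXh2 k) (hX2 l)) (integrable_mul₂ (hXh2 k) (hXh2 l)),
      integral_condexp_mul_right hm (hX2 k) (hX2 l),
      integral_condexp_mul_right hm (hX2 l) (hX2 k), hS k l]
    have hc : ∫ ω, (μ[fun ω' => X ω' l|mZ]) ω * (μ[fun ω' => X ω' k|mZ]) ω ∂μ
        = ∫ ω, (μ[fun ω' => X ω' k|mZ]) ω * (μ[fun ω' => X ω' l|mZ]) ω ∂μ :=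
      integral_congr_ae (Filter.Eventually.of_forall fun ω => mul_comm _ _)
    rw [hc]
    ring
  have hrU : ∀ k j, ∫ ω, (X ω k - (μ[fun ω' => X ω' k|mZ]) ω) * U ω j ∂μ = 0 := by
    intro k j
    have hexp : ∀ ω, (X ω k - (μ[fun ω' => X ω' k|mZ]) ω) * U ω j
        = X ω k * U ω j - (μ[fun ω' => X ω' k|mZ]) ω * U ω j := fun ω => by ring
    simp only [hexp]
    rw [integral_sub (integrable_mul₂ (hX2 k) (hU2 j)) (integrable_mul₂ (hXh2 k) (hU2 j)),
      hXU0 k j, hXhU k j, sub_self]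
  have hUr : ∀ i l, ∫ ω, U ω i * (X ω l - (μ[fun ω' => X ω' l|mZ]) ω) ∂μ = 0 := by
    intro i l
    have hc : ∫ ω, U ω i * (X ω l - (μ[fun ω' => X ω' l|mZ]) ω) ∂μ
        = ∫ ω, (X ω l - (μ[fun ω' => X ω' l|mZ]) ω) * U ω i ∂μ :=
      integral_congr_ae (Filter.Eventually.of_forall fun ω => mul_comm _ _)
    rw [hc, hrU l i]
  have hXmU : ∀ i j, ∫ ω, (X ω i - meanVec μ X i) * U ω j ∂μ = 0 := by
    intro i j
    have hexp : ∀ ω, (X ω i - meanVec μ X i) * U ω j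
        = X ω i * U ω j - meanVec μ X i * U ω j := fun ω => by ring
    simp only [hexp]
    rw [integral_sub (integrable_mul₂ (hX2 i) (hU2 j)) ((hUi j).const_mul _),
      hXU0 i j, integral_const_mul]
    have : meanVec μ U j = 0 := hU0 j
    rw [show ∫ ω, U ω j ∂μ = 0 from hU0 j]
    ring
  -- matrix identity 1
  have hcross : crossCov μ X (resid μ mZ Y) = S * Hᵀ := by
    ext i j
    have e : crossCov μ X (resid μ mZ Y) i j
        = ∫ ω, (X ω i - meanVec μ X i)
          * (resid μ mZ Y ω j - meanVec μ (resid μ mZ Y) j) ∂μ := rfl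
    rw [e, hresmean j]
    have congr1 : ∫ ω, (X ω i - meanVec μ X i) * (resid μ mZ Y ω j - 0) ∂μ
        = ∫ ω, ((∑ k, H j k * ((X ω i - meanVec μ X i)
            * (X ω k - (μ[fun ω' => X ω' k|mZ]) ω)))
          + (X ω i - meanVec μ X i) * U ω j) ∂μ := by
      refine integral_congr_ae ?_
      filter_upwards [hresY] with ω hω
      rw [sub_zero, hω j, mul_add, Finset.mul_sum]
      congr 1
      exact Finset.sum_congr rfl fun k _ => by ring
    rw [congr1]
    have iS : ∀ k, Integrable (fun ω => H j k * ((X ω i - meanVec μ X i)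
        * (X ω k - (μ[fun ω' => X ω' k|mZ]) ω))) μ :=
      fun k => (integrable_mul₂ (hXc2 i) (hr2 k)).const_mul _
    rw [integral_add (integrable_finset_sum _ fun k _ => iS k)
        (integrable_mul₂ (hXc2 i) (hU2 j)),
      integral_finset_sum _ (fun k _ => iS k), hXmU i j, add_zero, Matrix.mul_apply]
    refine Finset.sum_congr rfl fun k _ => ?_
    rw [integral_const_mul, hXr i k, Matrix.transpose_apply, mul_comm]
  -- matrix identity 2
  have hresCov : crossCov μ (resid μ mZ Y) (resid μ mZ Y) = H * S * Hᵀ + crossCov μ U U := by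
    ext i j
    have e : crossCov μ (resid μ mZ Y) (resid μ mZ Y) i j
        = ∫ ω, (resid μ mZ Y ω i - meanVec μ (resid μ mZ Y) i)
          * (resid μ mZ Y ω j - meanVec μ (resid μ mZ Y) j) ∂μ := rfl
    rw [e, hresmean i, hresmean j]
    have congr2 : ∫ ω, (resid μ mZ Y ω i - 0) * (resid μ mZ Y ω j - 0) ∂μ
        = ∫ ω, ((∑ k, ∑ l, (H i k * H j l) * ((X ω k - (μ[fun ω' => X ω' k|mZ]) ω)
              * (X ω l - (μ[fun ω' => X ω' l|mZ]) ω)))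
            + (∑ k, H i k * ((X ω k - (μ[fun ω' => X ω' k|mZ]) ω) * U ω j))
            + (∑ l, H j l * (U ω i * (X ω l - (μ[fun ω' => X ω' l|mZ]) ω)))
            + U ω i * U ω j) ∂μ := by
      refine integral_congr_ae ?_
      filter_upwards [hresY] with ω hω
      rw [sub_zero, sub_zero, hω i, hω j]
      have eAB : (∑ k, H i k * (X ω k - (μ[fun ω' => X ω' k|mZ]) ω))
          * (∑ l, H j l * (X ω l - (μ[fun ω' => X ω' l|mZ]) ω))
          = ∑ k, ∑ l, (H i k * H j l) * ((X ω k - (μ[fun ω' => X ω' k|mZ]) ω)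
            * (X ω l - (μ[fun ω' => X ω' l|mZ]) ω)) := by
        rw [Finset.sum_mul_sum]
        exact Finset.sum_congr rfl fun k _ => Finset.sum_congr rfl fun l _ => by ring
      have eAv : (∑ k, H i k * (X ω k - (μ[fun ω' => X ω' k|mZ]) ω)) * U ω j
          = ∑ k, H i k * ((X ω k - (μ[fun ω' => X ω' k|mZ]) ω) * U ω j) := by
        rw [Finset.sum_mul]
        exact Finset.sum_congr rfl fun k _ => by ring
      have euB : U ω i * (∑ l, H j l * (X ω l - (μ[fun ω' => X ω' l|mZ]) ω))
          = ∑ l, H j l * (U ω i * (X ω l - (μ[fun ω' => X ω' l|mZ]) ω)) := by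
        rw [Finset.mul_sum]
        exact Finset.sum_congr rfl fun l _ => by ring
      rw [add_mul, mul_add, mul_add, eAB, eAv, euB]
      ring
    rw [congr2]
    have i1 : Integrable (fun ω => ∑ k, ∑ l, (H i k * H j l)
        * ((X ω k - (μ[fun ω' => X ω' k|mZ]) ω)
          * (X ω l - (μ[fun ω' => X ω' l|mZ]) ω))) μ :=
      integrable_finset_sum _ fun k _ => integrable_finset_sum _ fun l _ =>
        (integrable_mul₂ (hr2 k) (hr2 l)).const_mul _
    have i2 : Integrable (fun ω => ∑ k, H i k
        * ((X ω k - (μ[fun ω' => X ω' k|mZ]) ω) * U ω j)) μ :=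
      integrable_finset_sum _ fun k _ => (integrable_mul₂ (hr2 k) (hU2 j)).const_mul _
    have i3 : Integrable (fun ω => ∑ l, H j l
        * (U ω i * (X ω l - (μ[fun ω' => X ω' l|mZ]) ω))) μ :=
      integrable_finset_sum _ fun l _ => (integrable_mul₂ (hU2 i) (hr2 l)).const_mul _
    have i4 : Integrable (fun ω => U ω i * U ω j) μ := integrable_mul₂ (hU2 i) (hU2 j)
    rw [integral_add₄ i1 i2 i3 i4, integral_finset_sum _ (fun k _ =>
        integrable_finset_sum _ fun l _ => (integrable_mul₂ (hr2 k) (hr2 l)).const_mul _),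
      integral_finset_sum _ (fun k _ => (integrable_mul₂ (hr2 k) (hU2 j)).const_mul _),
      integral_finset_sum _ (fun l _ => (integrable_mul₂ (hU2 i) (hr2 l)).const_mul _)]
    have t1 : (∑ k, ∫ ω, ∑ l, (H i k * H j l) * ((X ω k - (μ[fun ω' => X ω' k|mZ]) ω)
        * (X ω l - (μ[fun ω' => X ω' l|mZ]) ω)) ∂μ)
        = ∑ k, ∑ l, H i k * S k l * H j l := by
      refine Finset.sum_congr rfl fun k _ => ?_
      rw [integral_finset_sum _ (fun l _ => (integrable_mul₂ (hr2 k) (hr2 l)).const_mul _)]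
      refine Finset.sum_congr rfl fun l _ => ?_
      rw [integral_const_mul, hrr k l]
      ring
    have t2 : (∑ k, ∫ ω, H i k * ((X ω k - (μ[fun ω' => X ω' k|mZ]) ω) * U ω j) ∂μ) = 0 := by
      refine Finset.sum_eq_zero fun k _ => ?_
      rw [integral_const_mul, hrU k j, mul_zero]
    have t3 : (∑ l, ∫ ω, H j l * (U ω i * (X ω l - (μ[fun ω' => X ω' l|mZ]) ω)) ∂μ) = 0 := by
      refine Finset.sum_eq_zero fun l _ => ?_
      rw [integral_const_mul, hUr i l, mul_zero]
    rw [t1, t2, t3, add_zero, add_zero, ← hUU i j, Matrix.add_apply]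
    congr 1
    rw [Matrix.mul_apply, Finset.sum_comm]
    refine Finset.sum_congr rfl fun l _ => ?_
    rw [Matrix.mul_apply, Matrix.transpose_apply, Finset.sum_mul]
  -- P = P2
  have hP2' : IsMoorePenrose (crossCov μ (resid μ mZ Y) (resid μ mZ Y)) P2 := by
    rw [hresCov]; exact hP2
  have hPeq : P = P2 := mp_unique hP hP2'
  -- final pointwise identity
  filter_upwards [part1] with ω hω
  show (crossCov μ X (resid μ mZ Y) * P).mulVec (resid μ mZ Y ω) + condExpVec μ mZ X ω
      = (S * Hᵀ * P2).mulVec (Y ω)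
        + ((1 : Matrix (Fin M) (Fin M) ℝ) - S * Hᵀ * P2 * H).mulVec (condExpVec μ mZ X ω)
  have hres_eq : resid μ mZ Y ω = Y ω - H.mulVec (condExpVec μ mZ X ω) := by
    show Y ω - condExpVec μ mZ Y ω = _
    rw [hω]
  rw [hcross, hPeq, hres_eq, Matrix.mulVec_sub, Matrix.sub_mulVec, Matrix.one_mulVec,
    ← Matrix.mulVec_mulVec (v := condExpVec μ mZ X ω) (M := S * Hᵀ * P2) (N := H)]
  abel
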